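/- Let g: ℝ^m → ℝ be (ξ, ζ)-smooth with 0 ≤ |ξ| ≤ ζ, and let U^{(1)}, …, U^{(n)} ∈ ℝ^{m×mn} satisfy U^{(i)}(U^{(i)})ᵀ = I and U^{(i)}(U^{(j)})ᵀ = 0 for i ≠ j. Define ḡ_i(x) := √n · g(U^{(i)}x) on ℝ^{mn}. Then {ḡ_i}_{i=1}^n is ζ-average-smooth: (1/n)∑_{i=1}^n ‖∇ḡ_i(x) - ∇ḡ_i(y)‖₂² ≤ ζ²‖x - y‖₂² for all x, y ∈ ℝ^{mn}. -/

import Mathlib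

open scoped RealInnerProductSpace BigOperators

section auxiliary
variable {E : Type*} [NormedAddCommGroup E] [InnerProductSpace ℝ E]

/-- Co-coercivity for a convex `L`-smooth function given via its Bregman-divergence bounds. -/
lemma coco (L : ℝ) (hL : 0 < L) (f : E → ℝ) (gr : E → E)
    (h1 : ∀ p q : E, 0 ≤ f p - f q - ⟪gr q, p - q⟫)
    (h2 : ∀ p q : E, f p - f q - ⟪gr q, p - q⟫ ≤ L / 2 * ‖p - q‖ ^ 2)
    (a b : E) : ‖gr a - gr b‖ ^ 2 ≤ L * ⟪gr a - gr b, a - b⟫ := by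
  have key : ∀ p q : E, ‖gr p - gr q‖ ^ 2 / (2 * L) ≤ f p - f q - ⟪gr q, p - q⟫ := by
    intro p q
    set s := gr p - gr q with hs
    set z := p - L⁻¹ • s with hz
    have e1 := h1 z q
    have e2 := h2 z p
    have hzp : z - p = -(L⁻¹ • s) := by rw [hz]; abel
    have hnz : ‖z - p‖ ^ 2 = L⁻¹ ^ 2 * ‖s‖ ^ 2 := by
      rw [hzp, norm_neg, norm_smul, mul_pow, Real.norm_eq_abs, sq_abs]
    have hzq : z - q = (p - q) - L⁻¹ • s := by rw [hz]; abel
    have i1 : ⟪gr q, z - q⟫ = ⟪gr q, p - q⟫ - L⁻¹ * ⟪gr q, s⟫ := by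
      rw [hzq, inner_sub_right, real_inner_smul_right]
    have i2 : ⟪gr p, z - p⟫ = -(L⁻¹ * ⟪gr p, s⟫) := by
      rw [hzp, inner_neg_right, real_inner_smul_right]
    have i3 : ⟪gr p, s⟫ - ⟪gr q, s⟫ = ‖s‖ ^ 2 := by
      rw [← inner_sub_left, ← hs, real_inner_self_eq_norm_sq]
    rw [i1] at e1
    rw [i2, hnz] at e2
    have hL' : (0:ℝ) < L⁻¹ := inv_pos.mpr hL
    have expand : ‖s‖ ^ 2 / (2 * L) = L⁻¹ * ‖s‖ ^ 2 - L / 2 * (L⁻¹ ^ 2 * ‖s‖ ^ 2) := by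
      field_simp
      ring
    nlinarith [e1, e2, i3]
  have k1 := key a b
  have k2 := key b a
  have hsym : (f a - f b - ⟪gr b, a - b⟫) + (f b - f a - ⟪gr a, b - a⟫)
      = ⟪gr a - gr b, a - b⟫ := by
    have : ⟪gr a, b - a⟫ = -⟪gr a, a - b⟫ := by
      rw [← inner_neg_right]; congr 1; abel
    rw [this, inner_sub_left]
    ring
  have hnrev : ‖gr b - gr a‖ = ‖gr a - gr b‖ := norm_sub_rev _ _
  rw [hnrev] at k2
  have : ‖gr a - gr b‖ ^ 2 / L ≤ ⟪gr a - gr b, a - b⟫ := by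
    rw [← hsym]
    have : ‖gr a - gr b‖ ^ 2 / L = ‖gr a - gr b‖ ^ 2 / (2 * L) + ‖gr a - gr b‖ ^ 2 / (2 * L) := by
      field_simp; ring
    linarith
  calc ‖gr a - gr b‖ ^ 2 = L * (‖gr a - gr b‖ ^ 2 / L) := by field_simp
    _ ≤ L * ⟪gr a - gr b, a - b⟫ := by
        exact mul_le_mul_of_nonneg_left this hL.le


set_option maxHeartbeats 1000000 in
lemma grad_lip [CompleteSpace E] (ξ ζ : ℝ) (hξζ : |ξ| ≤ ζ)
    (g : E → ℝ)
    (hsmooth : ∀ x y : E,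
      ξ / 2 * ‖x - y‖ ^ 2 ≤ g x - g y - ⟪gradient g y, x - y⟫ ∧
        g x - g y - ⟪gradient g y, x - y⟫ ≤ ζ / 2 * ‖x - y‖ ^ 2)
    (a b : E) : ‖gradient g a - gradient g b‖ ≤ ζ * ‖a - b‖ := by
  have hξle : ξ ≤ ζ := (le_abs_self ξ).trans hξζ
  have hnegξ : -ξ ≤ ζ := (neg_le_abs ξ).trans hξζ
  by_cases hab : a = b
  · simp [hab, sub_self]
  have hd : (0:ℝ) < ‖a - b‖ := by
    rw [norm_pos_iff]; exact sub_ne_zero_of_ne hab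
  refine le_of_forall_pos_le_add (fun δ hδ => ?_)
  set ε := δ / ‖a - b‖ with hε
  have hε0 : 0 < ε := div_pos hδ hd
  set ζ' := ζ + ε with hζ'
  set L := ζ - ξ + ε with hLdef
  have hL : 0 < L := by linarith
  have esq : ∀ p q : E, ‖p - q‖ ^ 2 = ‖p‖ ^ 2 - 2 * ⟪p, q⟫ + ‖q‖ ^ 2 := fun p q =>
    norm_sub_sq_real p q
  have e1 : ∀ p q : E, ⟪gradient g q - ξ • q, p - q⟫
      = ⟪gradient g q, p - q⟫ - ξ * (⟪p, q⟫ - ‖q‖ ^ 2) := by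
    intro p q
    simp only [inner_sub_left, inner_sub_right, real_inner_smul_left,
      real_inner_self_eq_norm_sq, real_inner_comm q p]
    ring
  have e2 : ∀ p q : E, ⟪ζ' • q - gradient g q, p - q⟫
      = ζ' * (⟪p, q⟫ - ‖q‖ ^ 2) - ⟪gradient g q, p - q⟫ := by
    intro p q
    simp only [inner_sub_left, inner_sub_right, real_inner_smul_left,
      real_inner_self_eq_norm_sq, real_inner_comm q p]
    ring
  have C1 := coco L hL (fun p => g p - ξ / 2 * ‖p‖ ^ 2)
      (fun p => gradient g p - ξ • p)
      (fun p q => by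
        have h := (hsmooth p q).1
        simp only [e1]
        nlinarith [h, esq p q])
      (fun p q => by
        have h := (hsmooth p q).2
        simp only [e1]
        nlinarith [h, esq p q, sq_nonneg ‖p - q‖, hε0.le])
      a b
  have C2 := coco L hL (fun p => ζ' / 2 * ‖p‖ ^ 2 - g p)
      (fun p => ζ' • p - gradient g p)
      (fun p q => by
        have h := (hsmooth p q).2
        simp only [e2]
        nlinarith [h, esq p q, sq_nonneg ‖p - q‖, hε0.le])
      (fun p q => by
        have h := (hsmooth p q).1
        simp only [e2]
        nlinarith [h, esq p q])
      a b
  set s := gradient g a - gradient g b with hs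
  set d := a - b with hdd
  have r1 : (gradient g a - ξ • a) - (gradient g b - ξ • b) = s - ξ • d := by
    rw [hs, hdd, smul_sub]; abel
  have r2 : (ζ' • a - gradient g a) - (ζ' • b - gradient g b) = ζ' • d - s := by
    rw [hs, hdd, smul_sub]; abel
  rw [r1] at C1
  rw [r2] at C2
  have E1 : ‖s - ξ • d‖ ^ 2 = ‖s‖ ^ 2 - 2 * (ξ * ⟪s, d⟫) + ξ ^ 2 * ‖d‖ ^ 2 := by
    rw [norm_sub_sq_real, real_inner_smul_right, norm_smul, mul_pow,
      Real.norm_eq_abs, sq_abs]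
  have E2 : ‖ζ' • d - s‖ ^ 2 = ζ' ^ 2 * ‖d‖ ^ 2 - 2 * (ζ' * ⟪s, d⟫) + ‖s‖ ^ 2 := by
    rw [norm_sub_sq_real, real_inner_smul_left, norm_smul, mul_pow,
      Real.norm_eq_abs, sq_abs, real_inner_comm]
  have I1 : ⟪s - ξ • d, d⟫ = ⟪s, d⟫ - ξ * ‖d‖ ^ 2 := by
    rw [inner_sub_left, real_inner_smul_left, real_inner_self_eq_norm_sq]
  have I2 : ⟪ζ' • d - s, d⟫ = ζ' * ‖d‖ ^ 2 - ⟪s, d⟫ := by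
    rw [inner_sub_left, real_inner_smul_left, real_inner_self_eq_norm_sq]
  rw [E1, I1] at C1
  rw [E2, I2] at C2
  have hLζ : L = ζ' - ξ := by rw [hLdef, hζ']; ring
  rw [hLζ] at C1 C2
  have key : ‖s‖ ^ 2 ≤ (ξ + ζ') * ⟪s, d⟫ - ξ * ζ' * ‖d‖ ^ 2 := by nlinarith [C1, C2]
  have CS : ⟪s, d⟫ ≤ ‖s‖ * ‖d‖ := real_inner_le_norm s d
  have hns : (0:ℝ) ≤ ‖s‖ := norm_nonneg s
  have hnd : (0:ℝ) ≤ ‖d‖ := norm_nonneg d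
  have hsum : (0:ℝ) ≤ ξ + ζ' := by linarith
  have goal' : ‖s‖ ≤ ζ' * ‖d‖ := by
    by_contra hcon
    push_neg at hcon
    have h2 : 0 < ‖s‖ - ζ' * ‖d‖ := by linarith
    have hξζ' : ξ * ‖d‖ ≤ ζ' * ‖d‖ := by
      apply mul_le_mul_of_nonneg_right _ hnd
      linarith
    have h1 : 0 < ‖s‖ - ξ * ‖d‖ := by linarith
    have hprod := mul_pos h1 h2
    have hP : (ξ + ζ') * ⟪s, d⟫ ≤ (ξ + ζ') * (‖s‖ * ‖d‖) :=
      mul_le_mul_of_nonneg_left CS hsum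
    nlinarith [key, hP, hprod]
  have hεd : ζ' * ‖d‖ = ζ * ‖d‖ + δ := by
    rw [hζ', hε]
    have : ‖d‖ = ‖a - b‖ := by rw [hdd]
    rw [this]
    rw [add_mul, div_mul_cancel₀ _ hd.ne']
  linarith


end auxiliary

/-- if `g` is `(ξ, ζ)`-smooth with `|ξ| ≤ ζ` and the matrices `U^{(i)}`
(given by their rows `u i a ∈ ℝ^{mn}`) have mutually orthogonal orthonormal rows, then the
family `ḡ_i(x) = √n · g(U^{(i)}x)` is `ζ`-average smooth. -/
theorem orthogonal_embedding_average_smooth (m n : ℕ) (hn : 0 < n) (ξ ζ : ℝ)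
    (hξζ : |ξ| ≤ ζ)
    (g : EuclideanSpace ℝ (Fin m) → ℝ) (hg : Differentiable ℝ g)
    (hsmooth : ∀ x y : EuclideanSpace ℝ (Fin m),
      ξ / 2 * ‖x - y‖ ^ 2 ≤ g x - g y - ⟪gradient g y, x - y⟫ ∧
        g x - g y - ⟪gradient g y, x - y⟫ ≤ ζ / 2 * ‖x - y‖ ^ 2)
    (u : Fin n → Fin m → EuclideanSpace ℝ (Fin (m * n)))
    (hU : ∀ (i j : Fin n) (a b : Fin m),
      ⟪u i a, u j b⟫ = if i = j ∧ a = b then (1 : ℝ) else 0)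
    (x y : EuclideanSpace ℝ (Fin (m * n))) :
    (1 / (n : ℝ)) * ∑ i : Fin n,
        ‖gradient (fun z : EuclideanSpace ℝ (Fin (m * n)) =>
            Real.sqrt n * g (WithLp.toLp 2 (fun a => ⟪u i a, z⟫) : EuclideanSpace ℝ (Fin m))) x
          - gradient (fun z : EuclideanSpace ℝ (Fin (m * n)) =>
            Real.sqrt n * g (WithLp.toLp 2 (fun a => ⟪u i a, z⟫) : EuclideanSpace ℝ (Fin m))) y‖ ^ 2 ≤
      ζ ^ 2 * ‖x - y‖ ^ 2 := by
  classical
  have hζ0 : (0:ℝ) ≤ ζ := (abs_nonneg ξ).trans hξζ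
  -- the linear maps A i
  have hAex : ∀ i : Fin n, ∃ A : EuclideanSpace ℝ (Fin (m * n)) →L[ℝ] EuclideanSpace ℝ (Fin m),
      ∀ z a, A z a = ⟪u i a, z⟫ := by
    intro i
    refine ⟨LinearMap.toContinuousLinearMap
      { toFun := fun z => (WithLp.toLp 2 (fun a => ⟪u i a, z⟫) : EuclideanSpace ℝ (Fin m)),
        map_add' := by intro z w; ext a; simp [inner_add_right],
        map_smul' := by intro c z; ext a; simp [inner_smul_right] }, fun z a => rfl⟩
  choose A hA using hAex
  have hAz : ∀ (i : Fin n) (z : EuclideanSpace ℝ (Fin (m * n))),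
      (WithLp.toLp 2 (fun a => ⟪u i a, z⟫) : EuclideanSpace ℝ (Fin m)) = A i z := by
    intro i z; ext a; simp [hA]
  -- gradient formula
  have hgradF : ∀ (i : Fin n) (z : EuclideanSpace ℝ (Fin (m * n))),
      gradient (fun z : EuclideanSpace ℝ (Fin (m * n)) =>
          Real.sqrt n * g (WithLp.toLp 2 (fun a => ⟪u i a, z⟫) : EuclideanSpace ℝ (Fin m))) z
        = Real.sqrt n • ∑ a : Fin m, gradient g (A i z) a • u i a := by
    intro i z
    have hfd : HasFDerivAt g ((InnerProductSpace.toDual ℝ _) (gradient g (A i z))) (A i z) :=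
      ((hg (A i z)).hasGradientAt).hasFDerivAt
    have hcomp : HasFDerivAt (fun w : EuclideanSpace ℝ (Fin (m * n)) => g (A i w))
        (((InnerProductSpace.toDual ℝ _) (gradient g (A i z))).comp (A i)) z :=
      hfd.comp z (A i).hasFDerivAt
    have hsmul : HasFDerivAt (fun w : EuclideanSpace ℝ (Fin (m * n)) =>
          Real.sqrt n * g (A i w))
        (Real.sqrt n • (((InnerProductSpace.toDual ℝ _) (gradient g (A i z))).comp (A i))) z :=
      hcomp.const_mul _
    have heq : (InnerProductSpace.toDual ℝ _)
          (Real.sqrt n • ∑ a : Fin m, gradient g (A i z) a • u i a)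
        = Real.sqrt n • (((InnerProductSpace.toDual ℝ _) (gradient g (A i z))).comp (A i)) := by
      apply ContinuousLinearMap.ext
      intro v
      simp only [InnerProductSpace.toDual_apply_apply, ContinuousLinearMap.coe_smul',
        Pi.smul_apply, ContinuousLinearMap.coe_comp', Function.comp_apply,
        smul_eq_mul]
      rw [real_inner_smul_left]
      congr 1
      rw [sum_inner]
      have : ⟪gradient g (A i z), A i v⟫ = ∑ a : Fin m, gradient g (A i z) a * (A i v) a := by
        rw [PiLp.inner_apply]; simp [RCLike.inner_apply, conj_trivial, mul_comm]
      rw [this]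
      refine Finset.sum_congr rfl fun a _ => ?_
      rw [real_inner_smul_left, hA]
    have : HasGradientAt (fun w : EuclideanSpace ℝ (Fin (m * n)) =>
          Real.sqrt n * g (WithLp.toLp 2 (fun a => ⟪u i a, w⟫) : EuclideanSpace ℝ (Fin m)))
        (Real.sqrt n • ∑ a : Fin m, gradient g (A i z) a • u i a) z := by
      rw [hasGradientAt_iff_hasFDerivAt, heq]
      simp only [hAz]
      exact hsmul
    exact this.gradient
  -- norm of combinations of orthonormal rows
  have hnormT : ∀ (i : Fin n) (c : EuclideanSpace ℝ (Fin m)),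
      ‖∑ a : Fin m, c a • u i a‖ ^ 2 = ‖c‖ ^ 2 := by
    intro i c
    rw [← real_inner_self_eq_norm_sq, ← real_inner_self_eq_norm_sq, sum_inner]
    have hterm : ∀ a : Fin m, ⟪c a • u i a, ∑ b : Fin m, c b • u i b⟫ = c a * c a := by
      intro a
      rw [real_inner_smul_left, inner_sum]
      have h1 : ∀ b : Fin m, ⟪u i a, c b • u i b⟫ = if a = b then c b else 0 := by
        intro b
        rw [real_inner_smul_right, hU]
        by_cases h : a = b <;> simp [h]
      rw [Finset.sum_congr rfl (fun b _ => h1 b)]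
      simp
    rw [Finset.sum_congr rfl (fun a _ => hterm a), PiLp.inner_apply]
    simp [RCLike.inner_apply, sq]
  -- per-index bound
  have per : ∀ i : Fin n,
      ‖gradient (fun z : EuclideanSpace ℝ (Fin (m * n)) =>
          Real.sqrt n * g (WithLp.toLp 2 (fun a => ⟪u i a, z⟫) : EuclideanSpace ℝ (Fin m))) x
        - gradient (fun z : EuclideanSpace ℝ (Fin (m * n)) =>
          Real.sqrt n * g (WithLp.toLp 2 (fun a => ⟪u i a, z⟫) : EuclideanSpace ℝ (Fin m))) y‖ ^ 2
      ≤ (n : ℝ) * (ζ ^ 2 * ∑ a : Fin m, ⟪u i a, x - y⟫ ^ 2) := by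
    intro i
    rw [hgradF i x, hgradF i y, ← smul_sub]
    have hsub : (∑ a : Fin m, gradient g (A i x) a • u i a)
        - (∑ a : Fin m, gradient g (A i y) a • u i a)
        = ∑ a : Fin m, (gradient g (A i x) - gradient g (A i y)) a • u i a := by
      rw [← Finset.sum_sub_distrib]
      refine Finset.sum_congr rfl fun a _ => ?_
      rw [← sub_smul]
      rfl
    rw [hsub, norm_smul, mul_pow, Real.norm_eq_abs, sq_abs,
      Real.sq_sqrt (Nat.cast_nonneg n), hnormT i _]
    apply mul_le_mul_of_nonneg_left _ (Nat.cast_nonneg n)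
    have hlip := grad_lip ξ ζ hξζ g hsmooth (A i x) (A i y)
    have hAd : ‖A i x - A i y‖ ^ 2 = ∑ a : Fin m, ⟪u i a, x - y⟫ ^ 2 := by
      rw [← map_sub, ← real_inner_self_eq_norm_sq, PiLp.inner_apply]
      simp [RCLike.inner_apply, hA, sq, inner_sub_right]
    calc ‖gradient g (A i x) - gradient g (A i y)‖ ^ 2
        ≤ (ζ * ‖A i x - A i y‖) ^ 2 := pow_le_pow_left₀ (norm_nonneg _) hlip 2
      _ = ζ ^ 2 * ∑ a : Fin m, ⟪u i a, x - y⟫ ^ 2 := by rw [mul_pow, hAd]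
  -- Bessel
  have horth : Orthonormal ℝ (fun p : Fin n × Fin m => u p.1 p.2) := by
    rw [orthonormal_iff_ite]
    intro p q
    rw [hU]
    by_cases h : p = q
    · simp [h]
    · have h' : ¬(p.1 = q.1 ∧ p.2 = q.2) := by
        intro hx
        exact h (Prod.ext hx.1 hx.2)
      simp [h, h']
  have bessel : ∑ i : Fin n, ∑ a : Fin m, ⟪u i a, x - y⟫ ^ 2 ≤ ‖x - y‖ ^ 2 := by
    have h := horth.sum_inner_products_le (x := x - y) (s := (Finset.univ : Finset (Fin n × Fin m)))
    simp only [Real.norm_eq_abs, sq_abs] at h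
    rwa [Fintype.sum_prod_type] at h
  have hsum : ∑ i : Fin n,
      ‖gradient (fun z : EuclideanSpace ℝ (Fin (m * n)) =>
          Real.sqrt n * g (WithLp.toLp 2 (fun a => ⟪u i a, z⟫) : EuclideanSpace ℝ (Fin m))) x
        - gradient (fun z : EuclideanSpace ℝ (Fin (m * n)) =>
          Real.sqrt n * g (WithLp.toLp 2 (fun a => ⟪u i a, z⟫) : EuclideanSpace ℝ (Fin m))) y‖ ^ 2
      ≤ (n : ℝ) * (ζ ^ 2 * ‖x - y‖ ^ 2) := by
    calc _ ≤ ∑ i : Fin n, (n : ℝ) * (ζ ^ 2 * ∑ a : Fin m, ⟪u i a, x - y⟫ ^ 2) :=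
          Finset.sum_le_sum (fun i _ => per i)
      _ = (n : ℝ) * (ζ ^ 2 * ∑ i : Fin n, ∑ a : Fin m, ⟪u i a, x - y⟫ ^ 2) := by
          rw [← Finset.mul_sum, ← Finset.mul_sum]
      _ ≤ (n : ℝ) * (ζ ^ 2 * ‖x - y‖ ^ 2) := by
          apply mul_le_mul_of_nonneg_left _ (Nat.cast_nonneg n)
          exact mul_le_mul_of_nonneg_left bessel (sq_nonneg ζ)
  have hn' : (0:ℝ) < (n : ℝ) := Nat.cast_pos.mpr hn
  calc (1 / (n : ℝ)) * _ ≤ (1 / (n : ℝ)) * ((n : ℝ) * (ζ ^ 2 * ‖x - y‖ ^ 2)) :=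
        mul_le_mul_of_nonneg_left hsum (by positivity)
    _ = ζ ^ 2 * ‖x - y‖ ^ 2 := by field_simp
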